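/- For α > 0, 0 ≤ γ < 1, ρ > 0, the generalized fractional integral ρJ_{a+}^α maps the weighted space C_{γ,ρ}[a,b] into itself and is bounded: there is a constant K = (Γ(1-γ)/Γ(α+1-γ)) ((b^ρ-a^ρ)/ρ)^α such that ‖ρJ_{a+}^α φ‖_{C_{γ,ρ}} ≤ K ‖φ‖_{C_{γ,ρ}}. -/

import Mathlib

open Real MeasureTheory Set Filter Topology

/-- Generalized (Katugampola) fractional integral; identity for `α = 0`. -/
noncomputable def igral (ρ α a : ℝ) (φ : ℝ → ℝ) (x : ℝ) : ℝ :=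
  if α = 0 then φ x
  else ρ ^ (1 - α) / Real.Gamma α * ∫ t in a..x, t ^ (ρ - 1) * φ t * (x ^ ρ - t ^ ρ) ^ (α - 1)

/-- Generalized (Katugampola) fractional derivative of order `α ∈ (0,1)`. -/
noncomputable def genD (ρ α a : ℝ) (φ : ℝ → ℝ) (x : ℝ) : ℝ :=
  x ^ (1 - ρ) * deriv (igral ρ (1 - α) a φ) x

/-- Hilfer–Katugampola fractional derivative of order `α` and type `β`. -/
noncomputable def hkD (ρ α β a : ℝ) (φ : ℝ → ℝ) : ℝ → ℝ :=
  igral ρ (β * (1 - α)) a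
    (fun s => s ^ (1 - ρ) * deriv (igral ρ ((1 - β) * (1 - α)) a φ) s)

/-- Membership in the weighted space `C_{γ,ρ}[a,b]`. -/
def MemW (ρ γ a b : ℝ) (φ : ℝ → ℝ) : Prop :=
  ∃ h : ℝ → ℝ, ContinuousOn h (Icc a b) ∧
    ∀ x ∈ Ioc a b, h x = ((x ^ ρ - a ^ ρ) / ρ) ^ γ * φ x

/-- Weighted sup-norm on `C_{γ,ρ}[a,b]`. -/
noncomputable def wnorm (ρ γ a b : ℝ) (φ : ℝ → ℝ) : ℝ :=
  sSup ((fun x => |((x ^ ρ - a ^ ρ) / ρ) ^ γ * φ x|) '' Ioc a b)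


lemma betaIntegrable {p q : ℝ} (hp : -1 < p) (hq : -1 < q) :
    IntervalIntegrable (fun u : ℝ => u ^ p * (1 - u) ^ q) volume 0 1 := by
  have h1 : IntervalIntegrable (fun u : ℝ => u ^ p * (1 - u) ^ q) volume 0 (1/2) := by
    apply (intervalIntegral.intervalIntegrable_rpow' hp).mul_continuousOn
    apply ContinuousOn.rpow_const (continuousOn_const.sub continuousOn_id)
    intro x hx
    rw [uIcc_of_le (by norm_num)] at hx
    exact Or.inl (by intro hc; simp only [Pi.sub_apply, id] at hc; nlinarith [hx.2])
  have h2' : IntervalIntegrable (fun u : ℝ => (1 - u) ^ q) volume (1/2) 1 := by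
    have := (intervalIntegral.intervalIntegrable_rpow' hq (a := 0) (b := 1/2)).comp_sub_left 1
    norm_num at this
    exact this.symm
  have h2 : IntervalIntegrable (fun u : ℝ => u ^ p * (1 - u) ^ q) volume (1/2) 1 := by
    apply h2'.continuousOn_mul
    apply ContinuousOn.rpow_const continuousOn_id
    intro x hx
    rw [uIcc_of_le (by norm_num)] at hx
    exact Or.inl (by simp only [id]; nlinarith [hx.1])
  exact h1.trans h2

lemma betaValue {s t : ℝ} (hs : 0 < s) (ht : 0 < t) :
    ∫ u in (0:ℝ)..1, u ^ (s - 1) * (1 - u) ^ (t - 1)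
      = Real.Gamma s * Real.Gamma t / Real.Gamma (s + t) := by
  have hc : Complex.Gamma s * Complex.Gamma t
      = Complex.Gamma (s + t) * Complex.betaIntegral s t :=
    Complex.Gamma_mul_Gamma_eq_betaIntegral (by simpa using hs) (by simpa using ht)
  have key : Complex.betaIntegral s t
      = ((∫ u in (0:ℝ)..1, u ^ (s - 1) * (1 - u) ^ (t - 1) : ℝ) : ℂ) := by
    rw [Complex.betaIntegral, ← intervalIntegral.integral_ofReal]
    apply intervalIntegral.integral_congr
    intro u hu
    rw [uIcc_of_le (by norm_num)] at hu
    have h1 : ((u ^ (s-1) : ℝ) : ℂ) = (u : ℂ) ^ ((s:ℂ) - 1) := by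
      rw [Complex.ofReal_cpow hu.1]; push_cast; ring_nf
    have h2 : (((1 - u) ^ (t-1) : ℝ) : ℂ) = (1 - (u : ℂ)) ^ ((t:ℂ) - 1) := by
      rw [Complex.ofReal_cpow (by linarith [hu.2])]; push_cast; ring_nf
    push_cast
    rw [← h1, ← h2]
  rw [key] at hc
  have hreal : Real.Gamma s * Real.Gamma t
      = Real.Gamma (s + t) * ∫ u in (0:ℝ)..1, u ^ (s - 1) * (1 - u) ^ (t - 1) := by
    have := hc
    rw [show ((s:ℂ) + (t:ℂ)) = ((s + t : ℝ) : ℂ) by push_cast; ring,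
      Complex.Gamma_ofReal, Complex.Gamma_ofReal, Complex.Gamma_ofReal] at this
    exact_mod_cast this
  have hne : Real.Gamma (s + t) ≠ 0 := (Real.Gamma_pos_of_pos (by linarith)).ne'
  field_simp [hne] at hreal ⊢
  linarith [hreal]

lemma key_eq (ρ a b α γ : ℝ) (hα : 0 < α) (hγ0 : 0 ≤ γ) (hρ : 0 < ρ) (ha : 0 < a)
    {x : ℝ} (hx : x ∈ Ioc a b) (φ h : ℝ → ℝ)
    (hEq : ∀ t ∈ Ioc a b, h t = ((t ^ ρ - a ^ ρ) / ρ) ^ γ * φ t) :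
    ((x ^ ρ - a ^ ρ) / ρ) ^ γ * igral ρ α a φ x
      = ((x ^ ρ - a ^ ρ) / ρ) ^ α / Real.Gamma α *
        ∫ u in (0:ℝ)..1, u ^ (-γ) * (1 - u) ^ (α - 1)
          * h ((a ^ ρ + u * (x ^ ρ - a ^ ρ)) ^ (1/ρ)) := by
  obtain ⟨hax, hxb⟩ := hx
  set d : ℝ := x ^ ρ - a ^ ρ with hd_def
  set X : ℝ := d / ρ with hX_def
  have haρ : (0:ℝ) < a ^ ρ := Real.rpow_pos_of_pos ha ρ
  have hd : 0 < d := sub_pos.mpr (Real.rpow_lt_rpow ha.le hax hρ)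
  have hX : 0 < X := div_pos hd hρ
  set T : ℝ → ℝ := fun u => (a ^ ρ + u * d) ^ (1/ρ) with hT_def
  have hB : ∀ u : ℝ, 0 ≤ u → 0 < a ^ ρ + u * d := fun u hu => by nlinarith
  -- image
  have himg : T '' Ioo 0 1 = Ioo a x := by
    ext t
    constructor
    · rintro ⟨u, hu, rfl⟩
      have hB1 : a ^ ρ + u * d < x ^ ρ := by nlinarith [hu.1, hu.2]
      have hB0 : a ^ ρ < a ^ ρ + u * d := by nlinarith [hu.1]
      constructor
      · have := Real.rpow_lt_rpow haρ.le hB0 (by positivity : (0:ℝ) < 1/ρ)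
        rw [one_div, Real.rpow_rpow_inv ha.le hρ.ne'] at this
        simpa [hT_def, one_div] using this
      · have := Real.rpow_lt_rpow (hB u hu.1.le).le hB1 (by positivity : (0:ℝ) < 1/ρ)
        rw [one_div, Real.rpow_rpow_inv (le_of_lt (lt_trans ha hax)) hρ.ne'] at this
        simpa [hT_def, one_div] using this
    · rintro ⟨hat, htx⟩
      have h0t : 0 < t := lt_trans ha hat
      refine ⟨(t ^ ρ - a ^ ρ) / d, ⟨?_, ?_⟩, ?_⟩
      · have : a ^ ρ < t ^ ρ := Real.rpow_lt_rpow ha.le hat hρ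
        exact div_pos (by linarith) hd
      · rw [div_lt_one hd]
        have : t ^ ρ < x ^ ρ := Real.rpow_lt_rpow h0t.le htx hρ
        simp only [hd_def]; linarith
      · simp only [hT_def]
        rw [div_mul_cancel₀ _ hd.ne']
        rw [show a ^ ρ + (t ^ ρ - a ^ ρ) = t ^ ρ by ring, one_div,
          Real.rpow_rpow_inv h0t.le hρ.ne']
  -- derivative
  set T' : ℝ → ℝ := fun u => d * (1/ρ) * (a ^ ρ + u * d) ^ (1/ρ - 1) with hT'_def
  have hderiv : ∀ u ∈ Ioo (0:ℝ) 1, HasDerivWithinAt T (T' u) (Ioo 0 1) u := by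
    intro u hu
    have h1 : HasDerivAt (fun u : ℝ => a ^ ρ + u * d) d u := by
      simpa using (hasDerivAt_mul_const d (x := u)).const_add (a ^ ρ)
    have h2 := h1.rpow_const (p := 1/ρ) (Or.inl (hB u hu.1.le).ne')
    exact h2.hasDerivWithinAt
  -- injectivity
  have hinj : InjOn T (Ioo 0 1) := by
    have hmono : StrictMonoOn T (Ioo (0:ℝ) 1) := by
      intro u hu v hv huv
      exact Real.rpow_lt_rpow (hB u hu.1.le).le (by nlinarith) (by positivity)
    exact hmono.injOn
  -- change of variables
  have hchg : (∫ t in a..x, t ^ (ρ - 1) * φ t * (x ^ ρ - t ^ ρ) ^ (α - 1))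
      = ∫ u in Ioo (0:ℝ) 1, |T' u| • ((T u) ^ (ρ - 1) * φ (T u) * (x ^ ρ - (T u) ^ ρ) ^ (α - 1)) := by
    rw [intervalIntegral.integral_of_le hax.le, MeasureTheory.integral_Ioc_eq_integral_Ioo,
      ← himg, MeasureTheory.integral_image_eq_integral_abs_deriv_smul measurableSet_Ioo hderiv hinj]
  -- pointwise identity
  have hpt : ∀ u ∈ Ioo (0:ℝ) 1,
      |T' u| • ((T u) ^ (ρ - 1) * φ (T u) * (x ^ ρ - (T u) ^ ρ) ^ (α - 1))
        = (ρ ^ (α - 1) * X ^ (α - γ)) *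
          (u ^ (-γ) * (1 - u) ^ (α - 1) * h (T u)) := by
    intro u hu
    obtain ⟨hu0, hu1⟩ := hu
    set B : ℝ := a ^ ρ + u * d with hB_def
    have hBpos : 0 < B := hB u hu0.le
    have hTρ : (T u) ^ ρ = B := by
      simp only [hT_def, one_div]
      exact Real.rpow_inv_rpow hBpos.le hρ.ne'
    have hTpos : 0 < T u := Real.rpow_pos_of_pos hBpos _
    have hTIoc : T u ∈ Ioc a b := by
      have : T u ∈ Ioo a x := himg ▸ mem_image_of_mem T ⟨hu0, hu1⟩
      exact ⟨this.1, this.2.le.trans hxb⟩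
    -- express φ (T u)
    have hw : ((T u) ^ ρ - a ^ ρ) / ρ = u * X := by
      rw [hTρ]; simp only [hB_def, hX_def]; ring
    have hwpos : (0:ℝ) < u * X := by positivity
    have hφT : φ (T u) = (u * X) ^ (-γ) * h (T u) := by
      have := hEq (T u) hTIoc
      rw [hw] at this
      rw [this, ← mul_assoc, ← Real.rpow_add hwpos]
      simp
    -- T u ^ (ρ - 1)
    have hTpow : (T u) ^ (ρ - 1) = B ^ ((ρ - 1) / ρ) := by
      simp only [hT_def, ← hB_def]
      rw [← Real.rpow_mul hBpos.le]
      congr 1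
      field_simp
    have habs : |T' u| = d * (1 / ρ) * B ^ (1/ρ - 1) := by
      simp only [hT'_def, ← hB_def]
      exact abs_of_nonneg (by positivity)
    have e3 : x ^ ρ - B = (1 - u) * d := by simp only [hB_def, hd_def]; ring
    have e4 : ((1 - u) * d) ^ (α - 1) = (1 - u) ^ (α - 1) * d ^ (α - 1) :=
      Real.mul_rpow (by linarith) hd.le
    have e5 : (u * X) ^ (-γ) = u ^ (-γ) * X ^ (-γ) := Real.mul_rpow hu0.le hX.le
    have e7 : d ^ (α - 1) = ρ ^ (α - 1) * X ^ (α - 1) := by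
      rw [show d = ρ * X by rw [hX_def, mul_div_cancel₀ _ hρ.ne']]
      exact Real.mul_rpow hρ.le hX.le
    have e9 : d * (1 / ρ) = X := by rw [hX_def]; ring
    have e2 : B ^ (1/ρ - 1) * B ^ ((ρ - 1) / ρ) = 1 := by
      rw [← Real.rpow_add hBpos, show 1/ρ - 1 + (ρ - 1)/ρ = 0 by field_simp; ring, Real.rpow_zero]
    have eX : X * X ^ (-γ) * X ^ (α - 1) = X ^ (α - γ) := by
      have h' : X * X ^ (-γ) * X ^ (α - 1) = X ^ (1 + -γ + (α - 1)) := by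
        rw [Real.rpow_add hX, Real.rpow_add hX, Real.rpow_one]
      rw [h']; congr 1; ring
    rw [smul_eq_mul, habs, hTρ, hTpow, hφT, e3, e4, e5, e7, e9, ← eX]
    linear_combination (X * ((u ^ (-γ) * X ^ (-γ)) * h (T u)) *
      ((1 - u) ^ (α - 1) * (ρ ^ (α - 1) * X ^ (α - 1)))) * e2
  have hint2 : (∫ u in Ioo (0:ℝ) 1,
        |T' u| • ((T u) ^ (ρ - 1) * φ (T u) * (x ^ ρ - (T u) ^ ρ) ^ (α - 1)))
      = (ρ ^ (α - 1) * X ^ (α - γ)) *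
        ∫ u in Ioo (0:ℝ) 1, u ^ (-γ) * (1 - u) ^ (α - 1) * h (T u) := by
    rw [MeasureTheory.setIntegral_congr_fun measurableSet_Ioo fun u hu => hpt u hu]
    exact MeasureTheory.integral_const_mul _ _
  have hJ : (∫ u in Ioo (0:ℝ) 1, u ^ (-γ) * (1 - u) ^ (α - 1) * h (T u))
      = ∫ u in (0:ℝ)..1, u ^ (-γ) * (1 - u) ^ (α - 1) * h (T u) := by
    rw [intervalIntegral.integral_of_le zero_le_one, MeasureTheory.integral_Ioc_eq_integral_Ioo]
  have hρpow : ρ ^ (1 - α) * ρ ^ (α - 1) = 1 := by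
    rw [← Real.rpow_add hρ]; norm_num
  have hXpow : X ^ γ * X ^ (α - γ) = X ^ α := by
    rw [← Real.rpow_add hX]; ring_nf
  rw [igral, if_neg hα.ne', hchg, hint2, hJ]
  set J : ℝ := ∫ u in (0:ℝ)..1, u ^ (-γ) * (1 - u) ^ (α - 1) * h (T u) with hJ_def
  calc X ^ γ * (ρ ^ (1 - α) / Real.Gamma α * (ρ ^ (α - 1) * X ^ (α - γ) * J))
      = (ρ ^ (1 - α) * ρ ^ (α - 1)) * (X ^ γ * X ^ (α - γ)) * J / Real.Gamma α := by ring
    _ = X ^ α / Real.Gamma α * J := by rw [hρpow, hXpow]; ring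

/-- The generalized fractional integral is a bounded map of the weighted space
into itself. -/
theorem igral_bounded_on_weighted_space (ρ a b α γ : ℝ) (hα : 0 < α)
    (hγ0 : 0 ≤ γ) (hγ1 : γ < 1) (hρ : 0 < ρ) (ha : 0 < a) (hab : a < b) :
    ∀ φ : ℝ → ℝ, MemW ρ γ a b φ →
      MemW ρ γ a b (igral ρ α a φ) ∧
        wnorm ρ γ a b (igral ρ α a φ) ≤
          Real.Gamma (1 - γ) / Real.Gamma (α + 1 - γ) *
            ((b ^ ρ - a ^ ρ) / ρ) ^ α * wnorm ρ γ a b φ := by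
  intro φ hφ
  obtain ⟨h, hcont, hEq⟩ := hφ
  have hΓα : 0 < Real.Gamma α := Real.Gamma_pos_of_pos hα
  have haρ : (0:ℝ) < a ^ ρ := Real.rpow_pos_of_pos ha ρ
  obtain ⟨C, hC⟩ := isCompact_Icc.exists_bound_of_continuousOn hcont
  set T : ℝ → ℝ → ℝ := fun x u => (a ^ ρ + u * (x ^ ρ - a ^ ρ)) ^ (1/ρ) with hT_def
  -- basic facts about T
  have hbase_pos : ∀ x ∈ Icc a b, ∀ u ∈ Icc (0:ℝ) 1, 0 < a ^ ρ + u * (x ^ ρ - a ^ ρ) := by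
    intro x hx u hu
    have : a ^ ρ ≤ x ^ ρ := Real.rpow_le_rpow ha.le hx.1 hρ.le
    nlinarith [hu.1]
  have hT_mem : ∀ x ∈ Icc a b, ∀ u ∈ Icc (0:ℝ) 1, T x u ∈ Icc a b := by
    intro x hx u hu
    have h1 : a ^ ρ ≤ x ^ ρ := Real.rpow_le_rpow ha.le hx.1 hρ.le
    have h2 : x ^ ρ ≤ b ^ ρ := Real.rpow_le_rpow (ha.le.trans hx.1) hx.2 hρ.le
    have hb1 : a ^ ρ ≤ a ^ ρ + u * (x ^ ρ - a ^ ρ) := by nlinarith [hu.1]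
    have hb2 : a ^ ρ + u * (x ^ ρ - a ^ ρ) ≤ b ^ ρ := by nlinarith [hu.1, hu.2]
    constructor
    · have := Real.rpow_le_rpow haρ.le hb1 (by positivity : (0:ℝ) ≤ 1/ρ)
      rw [one_div, Real.rpow_rpow_inv ha.le hρ.ne'] at this
      simpa [hT_def, one_div] using this
    · have := Real.rpow_le_rpow (by linarith) hb2 (by positivity : (0:ℝ) ≤ 1/ρ)
      rw [one_div, Real.rpow_rpow_inv (by linarith : (0:ℝ) ≤ b) hρ.ne'] at this
      simpa [hT_def, one_div] using this
  have hT_mem' : ∀ x ∈ Ioc a b, ∀ u ∈ Ioc (0:ℝ) 1, T x u ∈ Ioc a b := by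
    intro x hx u hu
    have h1 : a ^ ρ < x ^ ρ := Real.rpow_lt_rpow ha.le hx.1 hρ
    have hb1 : a ^ ρ < a ^ ρ + u * (x ^ ρ - a ^ ρ) := by nlinarith [hu.1]
    refine ⟨?_, (hT_mem x ⟨hx.1.le, hx.2⟩ u ⟨hu.1.le, hu.2⟩).2⟩
    have := Real.rpow_lt_rpow haρ.le hb1 (by positivity : (0:ℝ) < 1/ρ)
    rw [one_div, Real.rpow_rpow_inv ha.le hρ.ne'] at this
    simpa [hT_def, one_div] using this
  -- the continuous representative of the image
  set F : ℝ → ℝ := fun x => ((x ^ ρ - a ^ ρ) / ρ) ^ α / Real.Gamma α *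
      ∫ u in (0:ℝ)..1, u ^ (-γ) * (1 - u) ^ (α - 1) * h (T x u) with hF_def
  have key : ∀ x ∈ Ioc a b,
      ((x ^ ρ - a ^ ρ) / ρ) ^ γ * igral ρ α a φ x = F x := fun x hx =>
    key_eq ρ a b α γ hα hγ0 hρ ha hx φ h hEq
  -- nonnegativity of beta factors
  have hfac : ∀ u : ℝ, u ∈ Ioc (0:ℝ) 1 → 0 ≤ u ^ (-γ) * (1 - u) ^ (α - 1) := by
    intro u hu
    have := Real.rpow_nonneg hu.1.le (-γ)
    have := Real.rpow_nonneg (by linarith [hu.2] : (0:ℝ) ≤ 1 - u) (α - 1)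
    positivity
  -- continuity of F
  have hTx_cont : ∀ x₀ ∈ Icc a b, ∀ u ∈ Icc (0:ℝ) 1,
      ContinuousWithinAt (fun x => h (T x u)) (Icc a b) x₀ := by
    intro x₀ hx₀ u hu
    have cT : ContinuousWithinAt (fun x => T x u) (Icc a b) x₀ := by
      apply ContinuousWithinAt.rpow_const
      · exact (continuousWithinAt_const.add (continuousWithinAt_const.mul
          ((continuousWithinAt_id.rpow_const (Or.inr hρ.le)).sub continuousWithinAt_const)))
      · exact Or.inl (hbase_pos x₀ hx₀ u hu).ne'
    exact (hcont (T x₀ u) (hT_mem x₀ hx₀ u hu)).comp (f := fun x => T x u) cT fun x hx => hT_mem x hx u hu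
  have hF_cont : ContinuousOn F (Icc a b) := by
    apply ContinuousOn.mul
    · apply ContinuousOn.div_const
      apply ContinuousOn.rpow_const
      · exact ((continuousOn_id.rpow_const fun x _ => Or.inr hρ.le).sub
          continuousOn_const).div_const ρ
      · exact fun x _ => Or.inr hα.le
    · intro x₀ hx₀
      apply intervalIntegral.continuousWithinAt_of_dominated_interval
        (bound := fun u => C * (u ^ (-γ) * (1 - u) ^ (α - 1)))
      · filter_upwards [self_mem_nhdsWithin] with x hx
        rw [uIoc_of_le (zero_le_one' ℝ), ← Measure.restrict_congr_set Ioo_ae_eq_Ioc]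
        apply ContinuousOn.aestronglyMeasurable _ measurableSet_Ioo
        apply ContinuousOn.mul
        · apply ContinuousOn.mul
          · exact continuousOn_id.rpow_const fun u hu => Or.inl hu.1.ne'
          · exact (continuousOn_const.sub continuousOn_id).rpow_const
              fun u hu => Or.inl (by intro hc; simp only [Pi.sub_apply, id] at hc; nlinarith [hu.2])
        · apply hcont.comp
          · apply ContinuousOn.rpow_const
            · exact continuousOn_const.add (continuousOn_id.mul continuousOn_const)
            · exact fun u hu => Or.inl (hbase_pos x hx u ⟨hu.1.le, hu.2.le⟩).ne'
          · exact fun u hu => hT_mem x hx u ⟨hu.1.le, hu.2.le⟩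
      · filter_upwards [self_mem_nhdsWithin] with x hx
        apply ae_of_all
        intro u hu
        rw [uIoc_of_le (zero_le_one' ℝ)] at hu
        have h1 : (0:ℝ) ≤ u ^ (-γ) := Real.rpow_nonneg hu.1.le _
        have h2 : (0:ℝ) ≤ (1 - u) ^ (α - 1) := Real.rpow_nonneg (by linarith [hu.2]) _
        rw [Real.norm_eq_abs, abs_mul, abs_of_nonneg (mul_nonneg h1 h2)]
        calc u ^ (-γ) * (1 - u) ^ (α - 1) * |h (T x u)|
            ≤ u ^ (-γ) * (1 - u) ^ (α - 1) * C := by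
              apply mul_le_mul_of_nonneg_left _ (mul_nonneg h1 h2)
              exact hC (T x u) (hT_mem x hx u ⟨hu.1.le, hu.2⟩)
          _ = C * (u ^ (-γ) * (1 - u) ^ (α - 1)) := by ring
      · have := (betaIntegrable (by linarith : (-1:ℝ) < -γ)
          (by linarith : (-1:ℝ) < α - 1)).const_mul C
        simpa using this
      · apply ae_of_all
        intro u hu
        rw [uIoc_of_le (zero_le_one' ℝ)] at hu
        exact (continuousWithinAt_const.mul (hTx_cont x₀ hx₀ u ⟨hu.1.le, hu.2⟩))
  have hMem : MemW ρ γ a b (igral ρ α a φ) := ⟨F, hF_cont, fun x hx => (key x hx).symm⟩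
  refine ⟨hMem, ?_⟩
  -- norm bound
  set W := wnorm ρ γ a b φ with hW_def
  have hbdd : BddAbove ((fun x => |((x ^ ρ - a ^ ρ) / ρ) ^ γ * φ x|) '' Ioc a b) := by
    refine ⟨C, ?_⟩
    rintro y ⟨x, hx, rfl⟩
    show |((x ^ ρ - a ^ ρ) / ρ) ^ γ * φ x| ≤ C
    rw [← hEq x hx]
    exact hC x ⟨hx.1.le, hx.2⟩
  have hW0 : 0 ≤ W := le_trans (abs_nonneg _)
    (le_csSup hbdd ⟨b, right_mem_Ioc.mpr hab, rfl⟩)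
  have hhle : ∀ t ∈ Ioc a b, |h t| ≤ W := by
    intro t ht
    rw [hEq t ht]
    exact le_csSup hbdd ⟨t, ht, rfl⟩
  have hΓ1γ : 0 < Real.Gamma (1 - γ) := Real.Gamma_pos_of_pos (by linarith)
  have hΓs : 0 < Real.Gamma (1 - γ + α) := Real.Gamma_pos_of_pos (by linarith)
  have hBval : (∫ u in (0:ℝ)..1, u ^ (-γ) * (1 - u) ^ (α - 1))
      = Real.Gamma (1 - γ) * Real.Gamma α / Real.Gamma (1 - γ + α) := by
    have := betaValue (by linarith : (0:ℝ) < 1 - γ) hα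
    simpa [show (1:ℝ) - γ - 1 = -γ by ring] using this
  have hXb : (0:ℝ) ≤ (b ^ ρ - a ^ ρ) / ρ := by
    have : a ^ ρ ≤ b ^ ρ := Real.rpow_le_rpow ha.le hab.le hρ.le
    exact div_nonneg (by linarith) hρ.le
  -- bound each value of F
  have hFbound : ∀ x ∈ Ioc a b, |F x| ≤
      Real.Gamma (1 - γ) / Real.Gamma (α + 1 - γ) * ((b ^ ρ - a ^ ρ) / ρ) ^ α * W := by
    intro x hx
    set J : ℝ := ∫ u in (0:ℝ)..1, u ^ (-γ) * (1 - u) ^ (α - 1) * h (T x u) with hJ_def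
    have hXx : (0:ℝ) ≤ (x ^ ρ - a ^ ρ) / ρ := by
      have : a ^ ρ ≤ x ^ ρ := Real.rpow_le_rpow ha.le hx.1.le hρ.le
      exact div_nonneg (by linarith) hρ.le
    have hJle : |J| ≤ W * (Real.Gamma (1 - γ) * Real.Gamma α / Real.Gamma (1 - γ + α)) := by
      have hre : J = ∫ u in Ioo (0:ℝ) 1, u ^ (-γ) * (1 - u) ^ (α - 1) * h (T x u) := by
        rw [hJ_def, intervalIntegral.integral_of_le zero_le_one,
          MeasureTheory.integral_Ioc_eq_integral_Ioo]
      have hgint : IntegrableOn (fun u => W * (u ^ (-γ) * (1 - u) ^ (α - 1))) (Ioo (0:ℝ) 1) := by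
        have := ((betaIntegrable (by linarith : (-1:ℝ) < -γ)
          (by linarith : (-1:ℝ) < α - 1)).const_mul W)
        rwa [intervalIntegrable_iff_integrableOn_Ioo_of_le zero_le_one] at this
      have hb : ∀ᵐ u ∂(volume.restrict (Ioo (0:ℝ) 1)),
          ‖u ^ (-γ) * (1 - u) ^ (α - 1) * h (T x u)‖ ≤ W * (u ^ (-γ) * (1 - u) ^ (α - 1)) := by
        rw [ae_restrict_iff' measurableSet_Ioo]
        apply ae_of_all
        intro u hu
        have h1 : (0:ℝ) ≤ u ^ (-γ) := Real.rpow_nonneg hu.1.le _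
        have h2 : (0:ℝ) ≤ (1 - u) ^ (α - 1) := Real.rpow_nonneg (by linarith [hu.2]) _
        rw [Real.norm_eq_abs, abs_mul, abs_of_nonneg (mul_nonneg h1 h2)]
        calc u ^ (-γ) * (1 - u) ^ (α - 1) * |h (T x u)|
            ≤ u ^ (-γ) * (1 - u) ^ (α - 1) * W := by
              apply mul_le_mul_of_nonneg_left _ (mul_nonneg h1 h2)
              exact hhle (T x u) (hT_mem' x hx u ⟨hu.1, hu.2.le⟩)
          _ = W * (u ^ (-γ) * (1 - u) ^ (α - 1)) := by ring
      have := MeasureTheory.norm_integral_le_of_norm_le hgint hb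
      rw [← hre] at this
      rw [Real.norm_eq_abs] at this
      refine this.trans ?_
      rw [MeasureTheory.integral_const_mul]
      apply mul_le_mul_of_nonneg_left _ hW0
      rw [← MeasureTheory.integral_Ioc_eq_integral_Ioo,
        ← intervalIntegral.integral_of_le zero_le_one, hBval]
    have hXle : ((x ^ ρ - a ^ ρ) / ρ) ^ α ≤ ((b ^ ρ - a ^ ρ) / ρ) ^ α := by
      apply Real.rpow_le_rpow hXx _ hα.le
      have h2 : x ^ ρ ≤ b ^ ρ := Real.rpow_le_rpow (ha.le.trans hx.1.le) hx.2 hρ.le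
      exact (div_le_div_iff_of_pos_right hρ).mpr (by linarith)
    have hXxα : (0:ℝ) ≤ ((x ^ ρ - a ^ ρ) / ρ) ^ α := Real.rpow_nonneg hXx _
    have step1 : |F x| ≤ ((x ^ ρ - a ^ ρ) / ρ) ^ α / Real.Gamma α *
        (W * (Real.Gamma (1 - γ) * Real.Gamma α / Real.Gamma (1 - γ + α))) := by
      rw [hF_def]
      rw [abs_mul, abs_of_nonneg (by positivity : (0:ℝ) ≤ ((x ^ ρ - a ^ ρ) / ρ) ^ α / Real.Gamma α)]
      exact mul_le_mul_of_nonneg_left hJle (by positivity)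
    refine step1.trans ?_
    have heq2 : (1:ℝ) - γ + α = α + 1 - γ := by ring
    rw [heq2] at hΓs ⊢
    have hrhs : ((x ^ ρ - a ^ ρ) / ρ) ^ α / Real.Gamma α *
        (W * (Real.Gamma (1 - γ) * Real.Gamma α / Real.Gamma (α + 1 - γ)))
        = Real.Gamma (1 - γ) / Real.Gamma (α + 1 - γ) * ((x ^ ρ - a ^ ρ) / ρ) ^ α * W := by
      field_simp
    rw [hrhs]
    apply mul_le_mul_of_nonneg_right _ hW0
    apply mul_le_mul_of_nonneg_left hXle (by positivity)
  -- conclude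
  apply Real.sSup_le
  · rintro y ⟨x, hx, rfl⟩
    show |((x ^ ρ - a ^ ρ) / ρ) ^ γ * igral ρ α a φ x| ≤ _
    rw [key x hx]
    exact hFbound x hx
  · have : 0 ≤ Real.Gamma (1 - γ) / Real.Gamma (α + 1 - γ) * ((b ^ ρ - a ^ ρ) / ρ) ^ α := by
      have := Real.rpow_nonneg hXb α
      have h3 : 0 < Real.Gamma (α + 1 - γ) := by
        have : (1:ℝ) - γ + α = α + 1 - γ := by ring
        rwa [this] at hΓs
      positivity
    exact mul_nonneg this hW0
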